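/- For the binary memory-with-stuck-at-faults channel with state S ∈ {0,1,2}, W_S(0)=W_S(1)=σ/2, W_S(2)=1−σ, input X ∈ {0,1} and output G = S if S ∈ {0,1} and G = X if S = 2: if T is any finite random variable independent of S and X is any function of (T,S), then I(T;G) ≤ 1 − h(σ/2), where h is the binary entropy function. -/

import Mathlib

open scoped BigOperators Classical
open Finset

noncomputable section

/-- A probability mass function on a finite alphabet. -/
def IsPMF {α : Type*} [Fintype α] (p : α → ℝ) : Prop :=
  (∀ a, 0 ≤ p a) ∧ ∑ a, p a = 1

/-- Shannon entropy (base 2) of a PMF on a finite alphabet. -/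
def ent {α : Type*} [Fintype α] (p : α → ℝ) : ℝ :=
  -∑ a, p a * Real.logb 2 (p a)

/-- Pushforward of a PMF along a map (distribution of a random variable). -/
def pf {Ω T : Type*} [Fintype Ω] (p : Ω → ℝ) (f : Ω → T) : T → ℝ :=
  fun t => ∑ ω, if f ω = t then p ω else 0

/-- Mutual information of a joint PMF on a product alphabet. -/
def mi2 {α β : Type*} [Fintype α] [Fintype β] (p : α × β → ℝ) : ℝ :=
  ent (fun a => ∑ b, p (a, b)) + ent (fun b => ∑ a, p (a, b)) - ent p

/-- Conditional entropy H(β | α) for a joint PMF on α × β. -/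
def condEnt {α β : Type*} [Fintype α] [Fintype β] (p : α × β → ℝ) : ℝ :=
  ent p - ent (fun a => ∑ b, p (a, b))

/-- Conditional mutual information I(β; γ | α) for a joint PMF on α × β × γ. -/
def cmi {α β γ : Type*} [Fintype α] [Fintype β] [Fintype γ] (p : α × β × γ → ℝ) : ℝ :=
  ent (fun ab : α × β => ∑ c, p (ab.1, ab.2, c))
    + ent (fun ac : α × γ => ∑ b, p (ac.1, b, ac.2))
    - ent p - ent (fun a => ∑ b, ∑ c, p (a, b, c))

/-- Total variation distance between two PMFs on a finite alphabet. -/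
def tv {α : Type*} [Fintype α] (p q : α → ℝ) : ℝ :=
  (∑ a, |p a - q a|) / 2

/-- The memory-with-stuck-at-faults channel: output equals the state when the state is
`0` or `1` (encoded as `false`/`true`), and equals the input when the state is `2`. -/
def msaf (s : Fin 3) (x : Bool) : Bool :=
  if s = 0 then false else if s = 1 then true else x

/-- Binary entropy function (base 2). -/
def binEnt (t : ℝ) : ℝ := -t * Real.logb 2 t - (1 - t) * Real.logb 2 (1 - t)

lemma binEnt_symm (a : ℝ) : binEnt (1 - a) = binEnt a := by
  have h : (1:ℝ) - (1 - a) = a := by ring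
  rw [binEnt, binEnt, h]; ring

lemma entPair (a q u : ℝ) (hq : 0 ≤ q) (ha : 0 < a) (ha1 : a < 1)
    (hu : u = a ∨ u = 1 - a) :
    -(q * u * Real.logb 2 (q * u)) - q * (1 - u) * Real.logb 2 (q * (1 - u))
      = -(q * Real.logb 2 q) + q * binEnt a := by
  rcases eq_or_lt_of_le hq with h0 | h0
  · simp [← h0]
  · have hu0 : 0 < u := by rcases hu with h | h <;> subst h <;> linarith
    have hu1 : 0 < 1 - u := by rcases hu with h | h <;> subst h <;> linarith
    have l1 : Real.logb 2 (q * u) = Real.logb 2 q + Real.logb 2 u :=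
      Real.logb_mul (ne_of_gt h0) (ne_of_gt hu0)
    have l2 : Real.logb 2 (q * (1 - u)) = Real.logb 2 q + Real.logb 2 (1 - u) :=
      Real.logb_mul (ne_of_gt h0) (ne_of_gt hu1)
    have hb : binEnt u = binEnt a := by
      rcases hu with h | h
      · rw [h]
      · rw [h, binEnt_symm]
    rw [l1, l2, ← hb, binEnt]; ring

lemma key_lin (y : ℝ) (hy : 0 ≤ y) :
    -(y * Real.logb 2 y) ≤ y - (y - 1/2) / Real.log 2 := by
  have hlog2 : 0 < Real.log 2 := Real.log_pos (by norm_num)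
  rcases eq_or_lt_of_le hy with h0 | h0
  · rw [← h0]
    have : (0:ℝ) - (0 - 1/2) / Real.log 2 = (1/2) / Real.log 2 := by ring
    rw [this]
    simp
    positivity
  · have h2y : 0 < 2 * y := by linarith
    have h := Real.log_le_sub_one_of_pos (x := (2*y)⁻¹) (by positivity)
    rw [Real.log_inv] at h
    have key : y - y * Real.log (2*y) ≤ 1/2 := by
      have := mul_le_mul_of_nonneg_left h hy
      have h' : y * (2*y)⁻¹ = 1/2 := by field_simp
      nlinarith
    have hlog : Real.log (2*y) = Real.log 2 + Real.log y :=
      Real.log_mul (by norm_num) (ne_of_gt h0)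
    rw [hlog] at key
    have goal' : -(y * Real.log y) ≤ y * Real.log 2 - (y - 1/2) := by nlinarith [key]
    rw [Real.logb]
    have e1 : -(y * (Real.log y / Real.log 2)) = -(y * Real.log y) / Real.log 2 := by ring
    have e2 : y - (y - 1/2)/Real.log 2 = (y * Real.log 2 - (y - 1/2))/Real.log 2 := by
      field_simp
    rw [e1, e2]
    gcongr

lemma bool_ent_le_one (r : Bool → ℝ) (h0 : ∀ b, 0 ≤ r b) (h1 : r false + r true = 1) :
    ent r ≤ 1 := by
  have hf := key_lin (r false) (h0 false)
  have ht := key_lin (r true) (h0 true)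
  have he : ent r = -(r false * Real.logb 2 (r false)) + -(r true * Real.logb 2 (r true)) := by
    simp only [ent, Fintype.sum_bool]; ring
  have hlog2 : 0 < Real.log 2 := Real.log_pos (by norm_num)
  have hz : (r false - 1/2)/Real.log 2 + (r true - 1/2)/Real.log 2 = 0 := by
    rw [← add_div, show r false - 1/2 + (r true - 1/2) = 0 from by linarith]
    simp
  rw [he]; linarith

/-- for the memory-with-stuck-at-faults channel with state distribution
`W_S(0) = W_S(1) = σ/2`, `W_S(2) = 1 − σ`, any `T ⫫ S` and any input `X = x(T,S)`,
`I(T;G) ≤ 1 − h(σ/2)`. -/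
theorem stmt_19 {T : Type*} [Fintype T]
    (σ : ℝ) (hσ : σ ∈ Set.Ioo (0 : ℝ) 1)
    (WS : Fin 3 → ℝ) (hWS0 : WS 0 = σ / 2) (hWS1 : WS 1 = σ / 2) (hWS2 : WS 2 = 1 - σ)
    (qT : T → ℝ) (hqT : IsPMF qT)
    (x : T → Fin 3 → Bool) :
    mi2 (pf (fun ts : T × Fin 3 => qT ts.1 * WS ts.2)
          (fun ts => (ts.1, msaf ts.2 (x ts.1 ts.2))))
      ≤ 1 - binEnt (σ / 2) := by
  obtain ⟨hσ0, hσ1⟩ := hσ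
  obtain ⟨hq0, hq1⟩ := hqT
  set a : ℝ := σ / 2 with ha_def
  have ha0 : 0 < a := by positivity
  have ha1 : a < 1 := by rw [ha_def]; linarith
  set p := pf (fun ts : T × Fin 3 => qT ts.1 * WS ts.2)
      (fun ts => (ts.1, msaf ts.2 (x ts.1 ts.2))) with hp_def
  have hm0 : ∀ b : Bool, msaf 0 b = false := fun b => rfl
  have hm1 : ∀ b : Bool, msaf 1 b = true := fun b => rfl
  have hm2 : ∀ b : Bool, msaf 2 b = b := fun b => rfl
  have hp : ∀ t g, p (t, g) = ∑ s : Fin 3, (if msaf s (x t s) = g then qT t * WS s else 0) := by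
    intro t g
    rw [hp_def]
    simp only [pf]
    rw [Fintype.sum_prod_type]
    rw [Finset.sum_eq_single t]
    · exact Finset.sum_congr rfl fun s _ => by simp [Prod.ext_iff]
    · intro b _ hb
      exact Finset.sum_eq_zero fun s _ => by simp [Prod.ext_iff, hb]
    · intro h; exact absurd (Finset.mem_univ t) h
  set u : T → ℝ := fun t => if x t 2 then a else 1 - a with hu_def
  have hu : ∀ t, u t = a ∨ u t = 1 - a := by
    intro t; rw [hu_def]; dsimp only; cases x t 2 <;> simp
  have hu0 : ∀ t, 0 ≤ u t := by
    intro t; rcases hu t with h | h <;> rw [h] <;> linarith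
  have hu1 : ∀ t, u t ≤ 1 := by
    intro t; rcases hu t with h | h <;> rw [h] <;> linarith
  have hpf : ∀ t, p (t, false) = qT t * u t := by
    intro t
    rw [hp, Fin.sum_univ_three, hm0, hm1, hm2, hu_def]
    cases h : x t 2 <;> simp [h, hWS0, hWS1, hWS2] <;> ring
  have hpt : ∀ t, p (t, true) = qT t * (1 - u t) := by
    intro t
    rw [hp, Fin.sum_univ_three, hm0, hm1, hm2, hu_def]
    cases h : x t 2 <;> simp [h, hWS0, hWS1, hWS2] <;> ring
  -- marginal over the output is qT
  have hmargT : (fun t => ∑ b : Bool, p (t, b)) = qT := by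
    funext t
    rw [Fintype.sum_bool, hpt, hpf]; ring
  -- joint entropy
  have hentp : ent p = ent qT + binEnt a := by
    rw [ent, Fintype.sum_prod_type]
    have step : ∀ t, ∑ b : Bool, p (t, b) * Real.logb 2 (p (t, b))
        = qT t * Real.logb 2 (qT t) - qT t * binEnt a := by
      intro t
      rw [Fintype.sum_bool, hpt, hpf]
      have := entPair a (qT t) (u t) (hq0 t) ha0 ha1 (hu t)
      linarith
    rw [Finset.sum_congr rfl fun t _ => step t, Finset.sum_sub_distrib,
      ← Finset.sum_mul, hq1, ent]
    ring
  -- output marginal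
  have hr0 : ∀ b, 0 ≤ ∑ t, p (t, b) := by
    intro b
    apply Finset.sum_nonneg
    intro t _
    cases b
    · rw [hpf]; exact mul_nonneg (hq0 t) (hu0 t)
    · rw [hpt]; exact mul_nonneg (hq0 t) (by linarith [hu1 t])
  have hr1 : (∑ t, p (t, false)) + (∑ t, p (t, true)) = 1 := by
    rw [← Finset.sum_add_distrib, ← hq1]
    exact Finset.sum_congr rfl fun t _ => by rw [hpf, hpt]; ring
  have hentG : ent (fun b => ∑ t, p (t, b)) ≤ 1 :=
    bool_ent_le_one _ hr0 hr1
  rw [mi2, hmargT, hentp]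
  linarith
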